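/- Let C', C be full triangulated subcategories of a triangulated category D, w a weight structure on C, and set C₁ = (C_{w≤-1})^{⊥_D} ∩ Obj C', C₂ = (C_{w≥0})^{⊥_D} ∩ Obj C'. If C₁ ⊥ C₂ and a t-structure t on C' is orthogonal to w (i.e., C_{w≤0} ⊥_D C'_{t≥1} and C_{w≥0} ⊥_D C'_{t≤-1}), then t = (C₂[1], C₁), i.e., C'_{t≤0} = C₂[1] and C'_{t≥0} = C₁. Consequently there is at most one t-structure on C' orthogonal to w. -/

import Mathlib

open CategoryTheory CategoryTheory.Limits CategoryTheory.Pretriangulated ZeroObject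

universe w' v u

variable (C : Type u) [Category.{v} C] [HasZeroObject C] [HasShift C ℤ]
  [Preadditive C] [∀ n : ℤ, (shiftFunctor C n).Additive] [Pretriangulated C]

/-- A t-structure `t = (C_{t≤0}, C_{t≥0})` on a triangulated category, in the homological
convention of the paper.  `le` is the class `C_{t≤0}` and `ge` is the class `C_{t≥0}`.
The condition `C_{t≤0} ⊆ C_{t≤0}[1]` is encoded as `le X → le (X⟦-1⟧)` (the classes being
closed under isomorphism), and `C_{t≥0}[1] ⊆ C_{t≥0}` as `ge X → ge (X⟦1⟧)`.
The class `C_{t≤i} = C_{t≤0}[i]` is `fun X => le (X⟦-i⟧)` and similarly for `C_{t≥i}`. -/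
structure PaperTStructure where
  /-- the class `C_{t≤0}` -/
  le : C → Prop
  /-- the class `C_{t≥0}` -/
  ge : C → Prop
  le_iso : ∀ {X Y : C}, (X ≅ Y) → le X → le Y
  ge_iso : ∀ {X Y : C}, (X ≅ Y) → ge X → ge Y
  le_shift : ∀ X : C, le X → le (X⟦(-1 : ℤ)⟧)
  ge_shift : ∀ X : C, ge X → ge (X⟦(1 : ℤ)⟧)
  /-- `C_{t≥0}[1] ⊥ C_{t≤0}` -/
  orth : ∀ (X Y : C), ge X → le Y → ∀ f : X⟦(1 : ℤ)⟧ ⟶ Y, f = 0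
  /-- every object `M` admits a `t`-decomposition `L → M → R → L[1]` with `L ∈ C_{t≥0}`,
  `R ∈ C_{t≤0}[-1]` (i.e. `R⟦1⟧ ∈ C_{t≤0}`) -/
  decomp : ∀ M : C, ∃ (L R : C) (f : L ⟶ M) (g : M ⟶ R) (h : R ⟶ L⟦(1 : ℤ)⟧),
    (Triangle.mk f g h ∈ distTriang C) ∧ ge L ∧ le (R⟦(1 : ℤ)⟧)

/-- A weight structure `w = (C_{w≤0}, C_{w≥0})` on a triangulated category, in the homological
convention of the paper.  `le` is the class `C_{w≤0}` and `ge` is the class `C_{w≥0}`;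
both are retraction-closed.  `C_{w≤i} = C_{w≤0}[i]` is `fun X => le (X⟦-i⟧)`, similarly `ge`. -/
structure PaperWeightStructure where
  /-- the class `C_{w≤0}` -/
  le : C → Prop
  /-- the class `C_{w≥0}` -/
  ge : C → Prop
  le_retract : ∀ (X Y : C), le Y → (∃ (i : X ⟶ Y) (r : Y ⟶ X), i ≫ r = 𝟙 X) → le X
  ge_retract : ∀ (X Y : C), ge Y → (∃ (i : X ⟶ Y) (r : Y ⟶ X), i ≫ r = 𝟙 X) → ge X
  le_shift : ∀ X : C, le X → le (X⟦(-1 : ℤ)⟧)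
  ge_shift : ∀ X : C, ge X → ge (X⟦(1 : ℤ)⟧)
  /-- `C_{w≤0} ⊥ C_{w≥0}[1]` -/
  orth : ∀ (X Y : C), le X → ge Y → ∀ f : X ⟶ Y⟦(1 : ℤ)⟧, f = 0
  /-- every object `M` admits a weight decomposition `L → M → R → L[1]` with `L ∈ C_{w≤0}`,
  `R ∈ C_{w≥0}[1]` (i.e. `R⟦-1⟧ ∈ C_{w≥0}`) -/
  decomp : ∀ M : C, ∃ (L R : C) (f : L ⟶ M) (g : M ⟶ R) (h : R ⟶ L⟦(1 : ℤ)⟧),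
    (Triangle.mk f g h ∈ distTriang C) ∧ le L ∧ ge (R⟦(-1 : ℤ)⟧)

/-- A class of objects is extension-closed if it contains `0` and for every distinguished
triangle `X → Y → Z → X[1]` with `X, Z` in the class, `Y` lies in the class. -/
def ExtClosed (P : C → Prop) : Prop :=
  P (0 : C) ∧ ∀ T : Triangle C, (T ∈ distTriang C) → P T.obj₁ → P T.obj₃ → P T.obj₂

/-- A class of objects is retraction-closed if it contains all retracts of its elements. -/
def RetractClosed (P : C → Prop) : Prop :=
  ∀ X Y : C, P Y → (∃ (i : X ⟶ Y) (r : Y ⟶ X), i ≫ r = 𝟙 X) → P X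

/-- A (strictly full) triangulated subcategory, given by its class of objects: it contains
`0`, is closed under isomorphisms, shifts, and extensions. -/
def IsTriangSub (S : C → Prop) : Prop :=
  S (0 : C) ∧ (∀ {X Y : C}, (X ≅ Y) → S X → S Y) ∧
  (∀ (X : C) (n : ℤ), S X → S (X⟦n⟧)) ∧
  (∀ T : Triangle C, (T ∈ distTriang C) → S T.obj₁ → S T.obj₃ → S T.obj₂)

/-- A t-structure on the full (triangulated) subcategory of the ambient category whose
class of objects is `S`; homological convention, as in `PaperTStructure`. -/
structure RelTStructure (S : C → Prop) where
  le : C → Prop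
  ge : C → Prop
  le_sub : ∀ X : C, le X → S X
  ge_sub : ∀ X : C, ge X → S X
  le_iso : ∀ {X Y : C}, (X ≅ Y) → le X → le Y
  ge_iso : ∀ {X Y : C}, (X ≅ Y) → ge X → ge Y
  le_shift : ∀ X : C, le X → le (X⟦(-1 : ℤ)⟧)
  ge_shift : ∀ X : C, ge X → ge (X⟦(1 : ℤ)⟧)
  orth : ∀ (X Y : C), ge X → le Y → ∀ f : X⟦(1 : ℤ)⟧ ⟶ Y, f = 0
  decomp : ∀ M : C, S M → ∃ (L R : C) (f : L ⟶ M) (g : M ⟶ R) (h : R ⟶ L⟦(1 : ℤ)⟧),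
    (Triangle.mk f g h ∈ distTriang C) ∧ ge L ∧ le (R⟦(1 : ℤ)⟧)

/-- A weight structure on the full (triangulated) subcategory of the ambient category whose
class of objects is `S`; homological convention, as in `PaperWeightStructure`. -/
structure RelWeightStructure (S : C → Prop) where
  le : C → Prop
  ge : C → Prop
  le_sub : ∀ X : C, le X → S X
  ge_sub : ∀ X : C, ge X → S X
  le_retract : ∀ (X Y : C), S X → le Y → (∃ (i : X ⟶ Y) (r : Y ⟶ X), i ≫ r = 𝟙 X) → le X
  ge_retract : ∀ (X Y : C), S X → ge Y → (∃ (i : X ⟶ Y) (r : Y ⟶ X), i ≫ r = 𝟙 X) → ge X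
  le_shift : ∀ X : C, le X → le (X⟦(-1 : ℤ)⟧)
  ge_shift : ∀ X : C, ge X → ge (X⟦(1 : ℤ)⟧)
  orth : ∀ (X Y : C), le X → ge Y → ∀ f : X ⟶ Y⟦(1 : ℤ)⟧, f = 0
  decomp : ∀ M : C, S M → ∃ (L R : C) (f : L ⟶ M) (g : M ⟶ R) (h : R ⟶ L⟦(1 : ℤ)⟧),
    (Triangle.mk f g h ∈ distTriang C) ∧ le L ∧ ge (R⟦(-1 : ℤ)⟧)


section Aux

variable {C}

lemma RelTStructure.ext' {S : C → Prop} {t t' : RelTStructure C S}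
    (h1 : t.le = t'.le) (h2 : t.ge = t'.ge) : t = t' := by
  cases t; cases t'; cases h1; cases h2; rfl

/-- The key characterization: under the hypotheses, `t.le = C₂[1]` and `t.ge = C₁`. -/
lemma stmt12_key (objC objC' : C → Prop)
    (hC : IsTriangSub C objC) (hC' : IsTriangSub C objC')
    (w : RelWeightStructure C objC) (t : RelTStructure C objC')
    (h12 : ∀ Y Z : C,
      (objC' Y ∧ ∀ X : C, w.le (X⟦(1 : ℤ)⟧) → ∀ f : X ⟶ Y, f = 0) →
      (objC' Z ∧ ∀ X : C, w.ge X → ∀ f : X ⟶ Z, f = 0) →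
      ∀ f : Y ⟶ Z, f = 0)
    (horth1 : ∀ X Y : C, w.le X → t.ge (Y⟦(-1 : ℤ)⟧) → ∀ f : X ⟶ Y, f = 0)
    (horth2 : ∀ X Y : C, w.ge X → t.le (Y⟦(1 : ℤ)⟧) → ∀ f : X ⟶ Y, f = 0) :
    (∀ Y : C, t.le Y ↔
      (objC' Y ∧ ∀ X : C, w.ge X → ∀ f : X ⟶ Y⟦(-1 : ℤ)⟧, f = 0)) ∧
    (∀ Y : C, t.ge Y ↔
      (objC' Y ∧ ∀ X : C, w.le (X⟦(1 : ℤ)⟧) → ∀ f : X ⟶ Y, f = 0)) := by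
  -- isomorphism closure of `w.le`
  have wle_iso : ∀ {X Y : C}, (X ≅ Y) → w.le X → w.le Y := by
    intro X Y e hX
    exact w.le_retract Y X (hC.2.1 e (w.le_sub X hX)) hX ⟨e.inv, e.hom, e.inv_hom_id⟩
  -- forward direction for `ge`
  have hBfwd : ∀ Y : C, t.ge Y →
      (objC' Y ∧ ∀ X : C, w.le (X⟦(1 : ℤ)⟧) → ∀ f : X ⟶ Y, f = 0) := by
    intro Y hY
    refine ⟨t.ge_sub Y hY, fun X hX f => ?_⟩
    have hY' : t.ge ((Y⟦(1 : ℤ)⟧)⟦(-1 : ℤ)⟧) := t.ge_iso (shiftShiftNeg Y 1).symm hY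
    have h0 : (shiftFunctor C (1 : ℤ)).map f = 0 :=
      horth1 (X⟦(1 : ℤ)⟧) (Y⟦(1 : ℤ)⟧) hX hY' _
    exact (shiftFunctor C (1 : ℤ)).map_injective (by simpa using h0)
  -- forward direction for `le`
  have hAfwd : ∀ Y : C, t.le Y →
      (objC' Y ∧ ∀ X : C, w.ge X → ∀ f : X ⟶ Y⟦(-1 : ℤ)⟧, f = 0) := by
    intro Y hY
    refine ⟨t.le_sub Y hY, fun X hX f => ?_⟩
    have hY' : t.le ((Y⟦(-1 : ℤ)⟧)⟦(1 : ℤ)⟧) := t.le_iso (shiftNegShift Y 1).symm hY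
    exact horth2 X (Y⟦(-1 : ℤ)⟧) hX hY' f
  -- membership of `R` in `C₂` when `t.le (R⟦1⟧)`
  have hC2 : ∀ R : C, t.le (R⟦(1 : ℤ)⟧) →
      (objC' R ∧ ∀ X : C, w.ge X → ∀ f : X ⟶ R, f = 0) := by
    intro R hR
    refine ⟨hC'.2.1 (shiftShiftNeg R 1) (hC'.2.2.1 _ (-1 : ℤ) (t.le_sub _ hR)),
      fun X hX f => horth2 X R hX hR f⟩
  -- membership of `L⟦1⟧` in `C₁` when `t.ge L`
  have hC1shift : ∀ L : C, t.ge L →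
      (objC' (L⟦(1 : ℤ)⟧) ∧ ∀ X : C, w.le (X⟦(1 : ℤ)⟧) →
        ∀ f : X ⟶ L⟦(1 : ℤ)⟧, f = 0) := by
    intro L hL
    refine ⟨hC'.2.2.1 _ (1 : ℤ) (t.ge_sub L hL), fun X hX f => ?_⟩
    have hXle : w.le X := wle_iso (shiftShiftNeg X 1) (w.le_shift _ hX)
    have hXle' : w.le ((X⟦(-1 : ℤ)⟧)⟦(1 : ℤ)⟧) := wle_iso (shiftNegShift X 1).symm hXle
    have h0 : (shiftFunctor C (-1 : ℤ)).map f ≫ (shiftShiftNeg L 1).hom = 0 :=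
      (hBfwd L hL).2 (X⟦(-1 : ℤ)⟧) hXle' _
    have h1 : (shiftFunctor C (-1 : ℤ)).map f = 0 := by
      rw [← cancel_mono (shiftShiftNeg L 1).hom, h0, zero_comp]
    exact (shiftFunctor C (-1 : ℤ)).map_injective (by simpa using h1)
  constructor
  · -- `t.le Y ↔ Y ∈ C₂[1]`
    intro Y
    refine ⟨hAfwd Y, fun ⟨hY', h2⟩ => ?_⟩
    obtain ⟨L, R, f, g, h, hT, hgeL, hleR⟩ :=
      t.decomp (Y⟦(-1 : ℤ)⟧) (hC'.2.2.1 _ (-1 : ℤ) hY')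
    have hf0 : f = 0 :=
      h12 L (Y⟦(-1 : ℤ)⟧) (hBfwd L hgeL) ⟨hC'.2.2.1 _ (-1 : ℤ) hY', h2⟩ f
    obtain ⟨ψ, hψ⟩ := Triangle.coyoneda_exact₁ (Triangle.mk f g h) hT
      (𝟙 (L⟦(1 : ℤ)⟧)) (by simp [hf0]; exact (Category.id_comp _).trans (Functor.map_zero _ _ _))
    have hψ0 : ψ = 0 := by
      have hleR' : t.le R := t.le_iso (shiftShiftNeg R 1) (t.le_shift _ hleR)
      exact t.orth L R hgeL hleR' ψ
    have hLzero : IsZero (L⟦(1 : ℤ)⟧) := by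
      rw [IsZero.iff_id_eq_zero, hψ, hψ0, zero_comp]
      rfl
    have hL0 : IsZero L :=
      (((shiftFunctor C (-1 : ℤ)).map_isZero hLzero).of_iso (shiftShiftNeg L (1 : ℤ)).symm)
    have : IsIso ((Triangle.mk f g h).mor₂) :=
      (Triangle.isZero₁_iff_isIso₂ (Triangle.mk f g h) hT).1 hL0
    have eY : (R⟦(1 : ℤ)⟧) ≅ Y :=
      ((shiftFunctor C (1 : ℤ)).mapIso (asIso ((Triangle.mk f g h).mor₂))).symm ≪≫
        shiftNegShift Y 1
    exact t.le_iso eY hleR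
  · -- `t.ge Y ↔ Y ∈ C₁`
    intro Y
    refine ⟨hBfwd Y, fun ⟨hY', h1⟩ => ?_⟩
    obtain ⟨L, R, f, g, h, hT, hgeL, hleR⟩ := t.decomp Y hY'
    have hg0 : g = 0 := h12 Y R ⟨hY', h1⟩ (hC2 R hleR) g
    obtain ⟨ψ, hψ⟩ := Triangle.yoneda_exact₃ (Triangle.mk f g h) hT (𝟙 R)
      (by simp [hg0]; exact zero_comp)
    have hψ0 : ψ = 0 := h12 (L⟦(1 : ℤ)⟧) R (hC1shift L hgeL) (hC2 R hleR) ψ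
    have hR0 : IsZero R := by
      rw [IsZero.iff_id_eq_zero, hψ, hψ0, comp_zero]
      rfl
    have : IsIso ((Triangle.mk f g h).mor₁) :=
      (Triangle.isZero₃_iff_isIso₁ (Triangle.mk f g h) hT).1 hR0
    exact t.ge_iso (@asIso _ _ _ _ ((Triangle.mk f g h).mor₁) this) hgeL

end Aux

/-- `C`, `C'` full triangulated subcategories of the ambient category `D`
(here the ambient category is the variable `C` of this file, and the subcategories are given
by their object classes `objC`, `objC'`), `w` a weight structure on the subcategory `objC`,
`C₁ = (C_{w≤-1})^{⊥_D} ∩ Obj C'` and `C₂ = (C_{w≥0})^{⊥_D} ∩ Obj C'`.  If `C₁ ⊥ C₂` and a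
t-structure `t` on `objC'` is orthogonal to `w`, then `C'_{t≤0} = C₂[1]` and
`C'_{t≥0} = C₁`; consequently at most one t-structure on `objC'` is orthogonal to `w`. -/
theorem stmt12 (objC objC' : C → Prop)
    (hC : IsTriangSub C objC) (hC' : IsTriangSub C objC')
    (w : RelWeightStructure C objC) (t : RelTStructure C objC')
    (h12 : ∀ Y Z : C,
      (objC' Y ∧ ∀ X : C, w.le (X⟦(1 : ℤ)⟧) → ∀ f : X ⟶ Y, f = 0) →
      (objC' Z ∧ ∀ X : C, w.ge X → ∀ f : X ⟶ Z, f = 0) →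
      ∀ f : Y ⟶ Z, f = 0)
    (horth1 : ∀ X Y : C, w.le X → t.ge (Y⟦(-1 : ℤ)⟧) → ∀ f : X ⟶ Y, f = 0)
    (horth2 : ∀ X Y : C, w.ge X → t.le (Y⟦(1 : ℤ)⟧) → ∀ f : X ⟶ Y, f = 0) :
    (∀ Y : C, t.le Y ↔
      (objC' Y ∧ ∀ X : C, w.ge X → ∀ f : X ⟶ Y⟦(-1 : ℤ)⟧, f = 0)) ∧
    (∀ Y : C, t.ge Y ↔
      (objC' Y ∧ ∀ X : C, w.le (X⟦(1 : ℤ)⟧) → ∀ f : X ⟶ Y, f = 0)) ∧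
    (∀ t' : RelTStructure C objC',
      (∀ X Y : C, w.le X → t'.ge (Y⟦(-1 : ℤ)⟧) → ∀ f : X ⟶ Y, f = 0) →
      (∀ X Y : C, w.ge X → t'.le (Y⟦(1 : ℤ)⟧) → ∀ f : X ⟶ Y, f = 0) →
      t' = t) := by
  obtain ⟨hle, hge⟩ := stmt12_key objC objC' hC hC' w t h12 horth1 horth2
  refine ⟨hle, hge, fun t' horth1' horth2' => ?_⟩
  obtain ⟨hle', hge'⟩ := stmt12_key objC objC' hC hC' w t' h12 horth1' horth2'
  exact RelTStructure.ext'
    (funext fun Y => propext ((hle' Y).trans (hle Y).symm))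
    (funext fun Y => propext ((hge' Y).trans (hge Y).symm))
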